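/- Let α be a nonnegative random variable with finite expectation and continuous CDF F, let T ≥ 0, c ≥ 0, k = 3T + c, and suppose the essential supremum α_H of α is finite with k < α_H (so 0 < r_H = α_H − k < ∞). Then the function g(r) = m(k + r) − r satisfies lim_{r→0+} g(r) > 0 and lim_{r→r_H−} g(r) = −r_H < 0, hence there exists r* ∈ (0, r_H) with m(k + r*) = r*. Moreover the supplier's expected payoff U(r) = (2/3)·r·E[(α − k − r)⁺] attains a strictly positive global maximum over [0,∞) at some point of (0, r_H). -/

import Mathlib

open MeasureTheory Set Filter

/-- The cumulative distribution function of a distribution `μ` on `ℝ`. -/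
noncomputable def cdfR (μ : Measure ℝ) (t : ℝ) : ℝ := (μ (Iic t)).toReal

/-- The mean residual lifetime function `m(t) = E[α − t ∣ α > t]` (with value `0` when
`P(α > t) = 0`, using the junk-value convention `x / 0 = 0`). -/
noncomputable def mrl (μ : Measure ℝ) (t : ℝ) : ℝ :=
  (∫ x, max (x - t) 0 ∂μ) / (μ (Ioi t)).toReal

private lemma stmt9_integrable (μ : Measure ℝ) [IsProbabilityMeasure μ]
    (hint : Integrable id μ) (t : ℝ) :
    Integrable (fun x => max (x - t) 0) μ := by
  have h1 : Integrable (fun x : ℝ => x - t) μ := hint.sub (integrable_const t)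
  have h2 := h1.sup (integrable_const (0 : ℝ))
  simpa [Pi.sup_def] using h2

private lemma stmt9_lip (μ : Measure ℝ) [IsProbabilityMeasure μ]
    (hint : Integrable id μ) :
    LipschitzWith 1 (fun t => ∫ x, max (x - t) 0 ∂μ) := by
  refine LipschitzWith.of_dist_le_mul fun s t => ?_
  have hsub : (∫ x, max (x - s) 0 ∂μ) - (∫ x, max (x - t) 0 ∂μ)
      = ∫ x, (max (x - s) 0 - max (x - t) 0) ∂μ :=
    (integral_sub (stmt9_integrable μ hint s) (stmt9_integrable μ hint t)).symm
  have hbd : ∀ x : ℝ, ‖max (x - s) 0 - max (x - t) 0‖ ≤ dist s t := by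
    intro x
    have h1 : |max (x - s) 0 - max (x - t) 0| ≤ |(x - s) - (x - t)| :=
      abs_max_sub_max_le_abs _ _ _
    have h2 : |(x - s) - (x - t)| = |s - t| := by
      rw [show (x - s) - (x - t) = -(s - t) by ring, abs_neg]
    rw [Real.norm_eq_abs, Real.dist_eq]
    rw [h2] at h1
    exact h1
  have hnorm := norm_integral_le_of_norm_le_const (μ := μ)
      (f := fun x => max (x - s) 0 - max (x - t) 0) (C := dist s t)
      (Filter.Eventually.of_forall hbd)
  rw [Real.dist_eq, hsub]
  simpa [Real.norm_eq_abs] using hnorm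

private lemma stmt9_cont_cdf (μ : Measure ℝ) [IsProbabilityMeasure μ]
    (hcont : ∀ t : ℝ, μ {t} = 0) :
    Continuous (fun t => (μ (Iic t)).toReal) := by
  have hF : (fun t => (μ (Iic t)).toReal) = fun t => ProbabilityTheory.cdf μ t := by
    funext t; rw [ProbabilityTheory.cdf_eq_real, Measure.real]
  rw [hF]
  have hmono := ProbabilityTheory.monotone_cdf μ
  rw [continuous_iff_continuousAt]
  intro x
  rw [hmono.continuousAt_iff_leftLim_eq_rightLim, StieltjesFunction.rightLim_eq]
  have h1 : (ProbabilityTheory.cdf μ).measure {x} = 0 := by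
    rw [ProbabilityTheory.measure_cdf]; exact hcont x
  rw [StieltjesFunction.measure_singleton] at h1
  have h2 : ProbabilityTheory.cdf μ x - Function.leftLim (ProbabilityTheory.cdf μ) x ≤ 0 :=
    ENNReal.ofReal_eq_zero.mp h1
  have h3 : Function.leftLim (ProbabilityTheory.cdf μ) x ≤ ProbabilityTheory.cdf μ x :=
    hmono.leftLim_le le_rfl
  linarith

private lemma stmt9_ioi (μ : Measure ℝ) [IsProbabilityMeasure μ] (t : ℝ) :
    (μ (Ioi t)).toReal = 1 - (μ (Iic t)).toReal := by
  have h : μ (Ioi t) = 1 - μ (Iic t) := by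
    rw [← Set.compl_Iic, measure_compl measurableSet_Iic (measure_ne_top μ _), measure_univ]
  rw [h, ENNReal.toReal_sub_of_le prob_le_one ENNReal.one_ne_top, ENNReal.toReal_one]

/-- If the essential supremum `α_H` of `α` is finite with `k = 3T + c < α_H`
(so `0 < r_H = α_H − k < ∞`), then `g(r) = m(k+r) − r` has a strictly positive limit as
`r → 0+`, tends to `−r_H < 0` as `r → r_H−`, so it has a zero `r* ∈ (0, r_H)`; moreover
`U(r) = (2/3)·r·E[(α − k − r)⁺]` attains a strictly positive global maximum over `[0,∞)`
at some point of `(0, r_H)`. -/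
theorem stmt9 (μ : Measure ℝ) [IsProbabilityMeasure μ]
    (hnonneg : μ (Iio 0) = 0) (hint : Integrable id μ) (hcont : ∀ t : ℝ, μ {t} = 0)
    (T c : ℝ) (hT : 0 ≤ T) (hc : 0 ≤ c) (k : ℝ) (hk : k = 3*T + c)
    (αH : ℝ) (hαH : essSup (fun x : ℝ => (x : EReal)) μ = (αH : EReal))
    (hkαH : k < αH)
    (rH : ℝ) (hrH : rH = αH - k)
    (g : ℝ → ℝ) (hg : ∀ r : ℝ, g r = mrl μ (k + r) - r)
    (U : ℝ → ℝ) (hU : ∀ r : ℝ, U r = (2/3) * r * ∫ x, max (x - k - r) 0 ∂μ) :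
    (∃ L : ℝ, 0 < L ∧ Tendsto g (nhdsWithin 0 (Ioi 0)) (nhds L)) ∧
    (Tendsto g (nhdsWithin rH (Iio rH)) (nhds (-rH)) ∧ -rH < 0) ∧
    (∃ rstar : ℝ, rstar ∈ Ioo 0 rH ∧ mrl μ (k + rstar) = rstar) ∧
    (∃ r0 : ℝ, r0 ∈ Ioo 0 rH ∧ 0 < U r0 ∧ ∀ r : ℝ, 0 ≤ r → U r ≤ U r0) := by
  classical
  set h : ℝ → ℝ := fun t => ∫ x, max (x - t) 0 ∂μ with hh
  set D : ℝ → ℝ := fun t => (μ (Ioi t)).toReal with hD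
  have hrHpos : 0 < rH := by rw [hrH]; linarith
  have hDeq : D = fun t => 1 - (μ (Iic t)).toReal := funext fun t => stmt9_ioi μ t
  have hDcont : Continuous D := by
    rw [hDeq]; exact continuous_const.sub (stmt9_cont_cdf μ hcont)
  have hhcont : Continuous h := (stmt9_lip μ hint).continuous
  have hae : ∀ᵐ x ∂μ, x ≤ αH := by
    have h1 : ∀ᵐ x ∂μ, ((x : ℝ) : EReal) ≤ essSup (fun x : ℝ => (x : EReal)) μ :=
      ae_le_essSup
    rw [hαH] at h1
    filter_upwards [h1] with x hx using EReal.coe_le_coe_iff.mp hx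
  have hDpos : ∀ t, t < αH → 0 < μ (Ioi t) := by
    intro t ht
    rcases eq_or_ne (μ (Ioi t)) 0 with h0 | h0
    · exfalso
      have hle : ∀ᵐ x ∂μ, ((x : ℝ) : EReal) ≤ ((t : ℝ) : EReal) := by
        rw [ae_iff]
        convert h0 using 2
        ext x
        simp [EReal.coe_le_coe_iff, not_le]
      have h2 := essSup_le_of_ae_le (μ := μ) ((t : ℝ) : EReal) hle
      rw [hαH] at h2
      exact absurd (EReal.coe_le_coe_iff.mp h2) (not_le.mpr ht)
    · exact pos_iff_ne_zero.mpr h0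
  have hDtpos : ∀ t, t < αH → 0 < D t := fun t ht =>
    ENNReal.toReal_pos (hDpos t ht).ne' (measure_ne_top μ _)
  have hhpos : ∀ t, t < αH → 0 < h t := by
    intro t ht
    have ht1 : t < (t + αH) / 2 := by linarith
    have ht2 : (t + αH) / 2 < αH := by linarith
    have hmono' : ∀ x, (Ioi ((t + αH) / 2)).indicator (fun _ => (t + αH) / 2 - t) x
        ≤ max (x - t) 0 := by
      intro x
      by_cases hx : x ∈ Ioi ((t + αH) / 2)
      · rw [Set.indicator_of_mem hx]
        simp only [mem_Ioi] at hx
        exact le_max_of_le_left (by linarith)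
      · rw [Set.indicator_of_notMem hx]
        exact le_max_right _ _
    have hintind : Integrable ((Ioi ((t + αH) / 2)).indicator
        (fun _ => (t + αH) / 2 - t)) μ :=
      (integrable_const _).indicator measurableSet_Ioi
    have hle := integral_mono hintind (stmt9_integrable μ hint t) hmono'
    rw [integral_indicator_const _ measurableSet_Ioi, smul_eq_mul] at hle
    have hpos : 0 < (μ (Ioi ((t + αH) / 2))).toReal * ((t + αH) / 2 - t) :=
      mul_pos (ENNReal.toReal_pos (hDpos _ ht2).ne' (measure_ne_top μ _)) (by linarith)
    exact lt_of_lt_of_le hpos hle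
  have hhzero : ∀ t, αH ≤ t → h t = 0 := by
    intro t ht
    have hae0 : (fun x => max (x - t) 0) =ᵐ[μ] 0 := by
      filter_upwards [hae] with x hx
      simp only [Pi.zero_apply]
      exact max_eq_right (by linarith)
    exact integral_eq_zero_of_ae hae0
  have hmrl_eq : ∀ t, mrl μ t = h t / D t := fun t => rfl
  have hub : ∀ t, t < αH → mrl μ t ≤ αH - t := by
    intro t ht
    have hnum : h t ≤ (αH - t) * D t := by
      have hle : (fun x => max (x - t) 0) ≤ᵐ[μ] (Ioi t).indicator (fun _ => αH - t) := by
        filter_upwards [hae] with x hx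
        by_cases hxt : x ∈ Ioi t
        · rw [Set.indicator_of_mem hxt]
          exact max_le (by linarith) (by linarith)
        · rw [Set.indicator_of_notMem hxt]
          simp only [mem_Ioi, not_lt] at hxt
          exact max_le (by linarith) le_rfl
      have h2 := integral_mono_ae (stmt9_integrable μ hint t)
        ((integrable_const _).indicator measurableSet_Ioi) hle
      rwa [integral_indicator_const _ measurableSet_Ioi, smul_eq_mul, mul_comm] at h2
    rw [hmrl_eq, div_le_iff₀ (hDtpos t ht)]
    exact hnum
  have hmrl_nonneg : ∀ t, 0 ≤ mrl μ t := fun t =>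
    div_nonneg (integral_nonneg fun x => le_max_right _ _) ENNReal.toReal_nonneg
  have hmrlcont : ∀ t, t < αH → ContinuousAt (fun s => mrl μ s) t := by
    intro t ht
    have h1 : ContinuousAt (fun s => h s / D s) t :=
      (hhcont.continuousAt).div (hDcont.continuousAt) (hDtpos t ht).ne'
    exact h1
  -- Part 1
  have hLpos : 0 < mrl μ k := by
    rw [hmrl_eq]
    exact div_pos (hhpos k hkαH) (hDtpos k hkαH)
  have htend1 : Tendsto g (nhdsWithin 0 (Ioi 0)) (nhds (mrl μ k)) := by
    have h1 : Tendsto (fun r : ℝ => k + r) (nhdsWithin 0 (Ioi 0)) (nhds k) := by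
      have h0 : Tendsto (fun r : ℝ => k + r) (nhds 0) (nhds (k + 0)) :=
        tendsto_const_nhds.add tendsto_id
      simpa using h0.mono_left nhdsWithin_le_nhds
    have h2 : Tendsto (fun r : ℝ => mrl μ (k + r)) (nhdsWithin 0 (Ioi 0)) (nhds (mrl μ k)) :=
      (hmrlcont k hkαH).tendsto.comp h1
    have h3 : Tendsto (fun r : ℝ => mrl μ (k + r) - r) (nhdsWithin 0 (Ioi 0))
        (nhds (mrl μ k - 0)) :=
      h2.sub (tendsto_id.mono_left nhdsWithin_le_nhds)
    have hg' : g = fun r => mrl μ (k + r) - r := funext hg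
    rw [hg']
    simpa using h3
  -- Part 2
  have htend2 : Tendsto g (nhdsWithin rH (Iio rH)) (nhds (-rH)) := by
    have hlow : ∀ r : ℝ, -r ≤ g r := by
      intro r
      rw [hg]
      have := hmrl_nonneg (k + r)
      linarith
    have hupev : ∀ᶠ r in nhdsWithin rH (Iio rH), g r ≤ rH - 2 * r := by
      filter_upwards [self_mem_nhdsWithin] with r hr
      simp only [mem_Iio] at hr
      have hkr : k + r < αH := by rw [hrH] at hr; linarith
      have h1 := hub (k + r) hkr
      rw [hg, hrH]
      linarith
    have hlo : Tendsto (fun r : ℝ => -r) (nhdsWithin rH (Iio rH)) (nhds (-rH)) :=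
      (tendsto_id.neg).mono_left nhdsWithin_le_nhds
    have hhi : Tendsto (fun r : ℝ => rH - 2 * r) (nhdsWithin rH (Iio rH)) (nhds (-rH)) := by
      have h0 : Tendsto (fun r : ℝ => rH - 2 * r) (nhds rH) (nhds (rH - 2 * rH)) :=
        tendsto_const_nhds.sub (tendsto_const_nhds.mul tendsto_id)
      have he : rH - 2 * rH = -rH := by ring
      rw [he] at h0
      exact h0.mono_left nhdsWithin_le_nhds
    exact tendsto_of_tendsto_of_tendsto_of_le_of_le' hlo hhi
      (Filter.Eventually.of_forall hlow) hupev
  have hnegrH : -rH < 0 := by linarith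
  -- Part 3
  have hev1 : ∀ᶠ r in nhdsWithin (0:ℝ) (Ioi 0), 0 < g r :=
    htend1.eventually (eventually_gt_nhds hLpos)
  have hev2 : ∀ᶠ r in nhdsWithin (0:ℝ) (Ioi 0), r < rH :=
    (eventually_lt_nhds hrHpos).filter_mono nhdsWithin_le_nhds
  obtain ⟨a, hga, haH, ha0⟩ := (hev1.and (hev2.and self_mem_nhdsWithin)).exists
  replace ha0 : (0:ℝ) < a := ha0
  have hev3 : ∀ᶠ r in nhdsWithin rH (Iio rH), g r < 0 :=
    htend2.eventually (eventually_lt_nhds hnegrH)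
  have hev4 : ∀ᶠ r in nhdsWithin rH (Iio rH), a < r :=
    (eventually_gt_nhds haH).filter_mono nhdsWithin_le_nhds
  obtain ⟨b, hgb, hab, hbH⟩ := (hev3.and (hev4.and self_mem_nhdsWithin)).exists
  replace hbH : b < rH := hbH
  have hcontg : ContinuousOn g (Icc a b) := by
    intro r hr
    have hrH' : r < rH := lt_of_le_of_lt hr.2 hbH
    have hkr : k + r < αH := by rw [hrH] at hrH'; linarith
    have h1 : ContinuousAt (fun s : ℝ => mrl μ (k + s)) r :=
      (hmrlcont (k + r) hkr).comp ((continuous_const.add continuous_id).continuousAt)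
    have h2 : ContinuousAt (fun s : ℝ => mrl μ (k + s) - s) r := h1.sub continuousAt_id
    have hg' : g = fun s => mrl μ (k + s) - s := funext hg
    rw [hg']
    exact h2.continuousWithinAt
  have h0mem : (0:ℝ) ∈ Icc (g b) (g a) := ⟨le_of_lt hgb, le_of_lt hga⟩
  obtain ⟨rstar, hrmem, hr0⟩ := intermediate_value_Icc' (le_of_lt hab) hcontg h0mem
  have hpart3 : ∃ rstar : ℝ, rstar ∈ Ioo 0 rH ∧ mrl μ (k + rstar) = rstar := by
    refine ⟨rstar, ⟨lt_of_lt_of_le ha0 hrmem.1, lt_of_le_of_lt hrmem.2 hbH⟩, ?_⟩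
    have := hg rstar
    rw [hr0] at this
    linarith
  -- Part 4
  have hUeq : U = fun r => (2/3) * r * h (k + r) := by
    funext r
    rw [hU r]
    have : ∀ x : ℝ, x - k - r = x - (k + r) := fun x => by ring
    simp only [this]
    rfl
  have hUcont : Continuous U := by
    rw [hUeq]
    exact (continuous_const.mul continuous_id).mul
      (hhcont.comp (continuous_const.add continuous_id))
  obtain ⟨r0, hr0mem, hmax⟩ := isCompact_Icc.exists_isMaxOn
    (nonempty_Icc.mpr (le_of_lt hrHpos)) hUcont.continuousOn
  have hU1 : 0 < U (rH / 2) := by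
    rw [hUeq]
    have hhp : 0 < h (k + rH / 2) := hhpos _ (by rw [hrH]; linarith)
    have : (0:ℝ) < 2/3 * (rH / 2) := by positivity
    exact mul_pos this hhp
  have hUr0 : 0 < U r0 :=
    lt_of_lt_of_le hU1 (hmax ⟨by linarith, by linarith⟩)
  have hU0 : U 0 = 0 := by rw [hUeq]; simp
  have hUbig : ∀ r, rH ≤ r → U r = 0 := by
    intro r hr
    rw [hUeq]
    have : h (k + r) = 0 := hhzero (k + r) (by rw [hrH] at hr; linarith)
    simp [this]
  refine ⟨⟨mrl μ k, hLpos, htend1⟩, ⟨htend2, hnegrH⟩, hpart3, r0, ⟨?_, ?_⟩, hUr0, ?_⟩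
  · rcases lt_or_eq_of_le hr0mem.1 with h' | h'
    · exact h'
    · exfalso; rw [← h', hU0] at hUr0; exact lt_irrefl 0 hUr0
  · rcases lt_or_eq_of_le hr0mem.2 with h' | h'
    · exact h'
    · exfalso; rw [h'] at hUr0; rw [hUbig rH le_rfl] at hUr0; exact lt_irrefl 0 hUr0
  · intro r hr
    rcases le_or_gt r rH with hle | hlt
    · exact hmax ⟨hr, hle⟩
    · rw [hUbig r (le_of_lt hlt)]
      exact le_of_lt hUr0
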